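/- (Reduction to the modularization) Assume every singleton {i}, i ∈ [n], is independent. For each profit value q occurring among the p_i, let P_I^q be an inclusionwise maximal independent subset of minimum total weight of the profit class P^q = {i ∈ [n] : p_i = q}, and let I* = ∪_q P_I^q. Then: (a) for every feasible chain 𝒮 = (S_1, …, S_T) there exists a feasible chain 𝒮' = (S'_1, …, S'_T) with S'_T ⊆ I* and ∑_{t=1}^T Δ_t · ∑_{i ∈ S'_t} p_i ≥ ∑_{t=1}^T Δ_t · γ(S_t); and (b) every feasible chain 𝒮̂ with Ŝ_T ⊆ I* satisfies ∑_{t=1}^T Δ_t · γ(Ŝ_t) = ∑_{t=1}^T Δ_t · ∑_{i ∈ Ŝ_t} p_i. -/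
import Mathlib


open Finset

/-- A set `S` is independent if `γ S = ∑ i ∈ S, p i`. -/
def AoNIndep {n : ℕ} (γ : Finset (Fin n) → ℕ) (p : Fin n → ℕ) (S : Finset (Fin n)) : Prop :=
  γ S = ∑ i ∈ S, p i



variable {n : ℕ} {γ : Finset (Fin n) → ℕ} {p : Fin n → ℕ}

/-- L1: adding a set increases γ by at most its total profit. -/
lemma aon_union_le (haon : ∀ (i : Fin n) (S : Finset (Fin n)),
      γ (insert i S) = γ S ∨ γ (insert i S) = γ S + p i) :
    ∀ (D S : Finset (Fin n)), γ (S ∪ D) ≤ γ S + ∑ i ∈ D, p i := by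
  intro D
  induction D using Finset.induction with
  | empty => intro S; simp
  | @insert i D' hi ih =>
    intro S
    have h1 : S ∪ insert i D' = insert i (S ∪ D') := Finset.union_insert _ _ _
    rw [h1, Finset.sum_insert hi]
    rcases haon i (S ∪ D') with h | h <;> have := ih S <;> omega

/-- L2: γ is at most total profit. -/
lemma aon_le_sum (hγ0 : γ ∅ = 0)
    (haon : ∀ (i : Fin n) (S : Finset (Fin n)),
      γ (insert i S) = γ S ∨ γ (insert i S) = γ S + p i) :
    ∀ S : Finset (Fin n), γ S ≤ ∑ i ∈ S, p i := by
  intro S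
  have := aon_union_le haon S ∅
  simpa [hγ0] using this

/-- L3: subsets of independent sets are independent. -/
lemma aon_subset_indep (hγ0 : γ ∅ = 0)
    (haon : ∀ (i : Fin n) (S : Finset (Fin n)),
      γ (insert i S) = γ S ∨ γ (insert i S) = γ S + p i)
    {S B : Finset (Fin n)} (hSB : S ⊆ B) (hB : AoNIndep γ p B) :
    AoNIndep γ p S := by
  have h1 : γ (S ∪ (B \ S)) ≤ γ S + ∑ i ∈ B \ S, p i := aon_union_le haon _ _
  rw [Finset.union_sdiff_of_subset hSB] at h1
  have h2 : ∑ i ∈ B \ S, p i + ∑ i ∈ S, p i = ∑ i ∈ B, p i :=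
    Finset.sum_sdiff hSB
  have h3 := aon_le_sum hγ0 haon S
  unfold AoNIndep at hB ⊢
  omega

/-- L4: spanning is monotone. -/
lemma aon_span_mono
    (hmono : ∀ S T : Finset (Fin n), S ⊆ T → γ S ≤ γ T)
    (hsub : ∀ S T : Finset (Fin n), S ⊆ T → ∀ i : Fin n,
      γ (insert i S) + γ T ≥ γ (insert i T) + γ S)
    {S T : Finset (Fin n)} (hST : S ⊆ T) {i : Fin n}
    (h : γ (insert i S) = γ S) : γ (insert i T) = γ T := by
  have h1 := hsub S T hST i
  have h2 := hmono T (insert i T) (Finset.subset_insert _ _)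
  omega

/-- L5: a set of spanned elements adds nothing. -/
lemma aon_span_union
    (hmono : ∀ S T : Finset (Fin n), S ⊆ T → γ S ≤ γ T)
    (hsub : ∀ S T : Finset (Fin n), S ⊆ T → ∀ i : Fin n,
      γ (insert i S) + γ T ≥ γ (insert i T) + γ S) :
    ∀ (D S : Finset (Fin n)), (∀ i ∈ D, γ (insert i S) = γ S) →
      γ (S ∪ D) = γ S := by
  intro D
  induction D using Finset.induction with
  | empty => intro S _; simp
  | @insert i D' hi ih =>
    intro S hD
    have h1 : S ∪ insert i D' = insert i (S ∪ D') := Finset.union_insert _ _ _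
    have h2 : γ (S ∪ D') = γ S := ih S (fun j hj => hD j (Finset.mem_insert_of_mem hj))
    have h3 : γ (insert i (S ∪ D')) = γ (S ∪ D') := by
      have := aon_span_mono hmono hsub (Finset.subset_union_left (s₂ := D')) 
        (hD i (Finset.mem_insert_self i D'))
      rw [h2]; omega
    rw [h1, h3, h2]


lemma istar_indep
    (hp : ∀ i, 1 ≤ p i)
    (hγ0 : γ ∅ = 0)
    (hmono : ∀ S T : Finset (Fin n), S ⊆ T → γ S ≤ γ T)
    (hsub : ∀ S T : Finset (Fin n), S ⊆ T → ∀ i : Fin n,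
      γ (insert i S) + γ T ≥ γ (insert i T) + γ S)
    (haon : ∀ (i : Fin n) (S : Finset (Fin n)),
      γ (insert i S) = γ S ∨ γ (insert i S) = γ S + p i)
    (hsingle : ∀ i : Fin n, AoNIndep γ p {i})
    (PI : ℕ → Finset (Fin n))
    (hPIsub : ∀ q ∈ Finset.univ.image p, PI q ⊆ Finset.univ.filter (fun i => p i = q))
    (hPIindep : ∀ q ∈ Finset.univ.image p, AoNIndep γ p (PI q)) :
    ∀ S : Finset (Fin n), S ⊆ (Finset.univ.image p).biUnion PI → AoNIndep γ p S := by
  -- membership helper: every element of I* lies in PI (p x)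
  have hmem : ∀ x : Fin n, x ∈ (Finset.univ.image p).biUnion PI → x ∈ PI (p x) := by
    intro x hx
    obtain ⟨q, hq, hxq⟩ := Finset.mem_biUnion.mp hx
    have : p x = q := by
      simpa using (Finset.mem_filter.mp (hPIsub q hq hxq)).2
    rwa [this]
  intro S
  induction S using Finset.strongInduction with
  | _ S ih =>
    intro hS
    rcases Finset.eq_empty_or_nonempty S with rfl | ⟨x, hx⟩
    · simpa [AoNIndep] using hγ0
    have hSx : insert x (S.erase x) = S := Finset.insert_erase hx
    have herase_ss : S.erase x ⊂ S := Finset.erase_ssubset hx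
    have herase_ind : AoNIndep γ p (S.erase x) :=
      ih _ herase_ss ((Finset.erase_subset _ _).trans hS)
    rcases haon x (S.erase x) with h0 | h1
    · -- x is spanned by S.erase x : derive a contradiction
      exfalso
      -- family of spanning subsets
      set F := (S.erase x).powerset.filter (fun R => γ (insert x R) = γ R) with hF
      have hFne : F.Nonempty := ⟨S.erase x, by
        simp only [hF, Finset.mem_filter, Finset.mem_powerset]
        exact ⟨Finset.Subset.refl _, by rw [hSx] at h0 ⊢; exact h0⟩⟩
      obtain ⟨R, hRF, hRmin⟩ := Finset.exists_min_image F Finset.card hFne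
      have hRsub : R ⊆ S.erase x := Finset.mem_powerset.mp (Finset.mem_filter.mp hRF).1
      have hRspan : γ (insert x R) = γ R := (Finset.mem_filter.mp hRF).2
      have hxR : x ∉ R := fun h => (Finset.mem_erase.mp (hRsub h)).1 rfl
      have hRS : R ⊂ S := lt_of_le_of_lt hRsub herase_ss
      have hRind : AoNIndep γ p R := ih R hRS ((subset_of_ssubset hRS).trans hS)
      -- all elements of R have profit p x
      have hprofit : ∀ y ∈ R, p y = p x := by
        intro y hy
        have hyx : y ≠ x := fun h => hxR (h ▸ hy)
        have hRe_sub : R.erase y ⊆ S.erase x := (Finset.erase_subset _ _).trans hRsub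
        have hRe_ind : AoNIndep γ p (R.erase y) :=
          ih _ (lt_of_le_of_lt ((Finset.erase_subset _ _).trans hRsub) herase_ss)
            (((Finset.erase_subset _ _).trans (subset_of_ssubset hRS)).trans hS)
        -- minimality: R.erase y does not span x
        have hnotspan : γ (insert x (R.erase y)) ≠ γ (R.erase y) := by
          intro hcon
          have hmem' : R.erase y ∈ F := by
            simp only [hF, Finset.mem_filter, Finset.mem_powerset]
            exact ⟨hRe_sub, hcon⟩
          have := hRmin _ hmem'
          have := Finset.card_erase_of_mem hy
          have hpos : 0 < R.card := Finset.card_pos.mpr ⟨y, hy⟩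
          omega
        have hxspanplus : γ (insert x (R.erase y)) = γ (R.erase y) + p x :=
          (haon x (R.erase y)).resolve_left hnotspan
        have key1 : γ (insert x R) = ∑ i ∈ R, p i := by rw [hRspan]; exact hRind
        have key2 : γ (insert x (R.erase y)) = ∑ i ∈ R.erase y, p i + p x := by
          rw [hxspanplus, hRe_ind]
        have hsum : ∑ i ∈ R.erase y, p i + p y = ∑ i ∈ R, p i :=
          Finset.sum_erase_add _ _ hy
        -- monotonicity gives p x ≤ p y
        have hmle : γ (insert x (R.erase y)) ≤ γ (insert x R) :=
          hmono _ _ (Finset.insert_subset_insert _ (Finset.erase_subset _ _))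
        -- all-or-nothing for y over insert x (R.erase y)
        have hins : insert y (insert x (R.erase y)) = insert x R := by
          rw [Finset.insert_comm, Finset.insert_erase hy]
        rcases haon y (insert x (R.erase y)) with h2 | h2 <;>
          rw [hins] at h2
        · omega
        · have := hp x; omega
      -- R ∪ {x} sits inside PI (p x), which is independent
      have hq : p x ∈ Finset.univ.image p := Finset.mem_image_of_mem p (Finset.mem_univ x)
      have hsubPI : insert x R ⊆ PI (p x) := by
        intro z hz
        rcases Finset.mem_insert.mp hz with rfl | hzR
        · exact hmem z (hS hx)
        · have h1 : z ∈ PI (p z) := hmem z (hS (subset_of_ssubset hRS hzR))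
          rwa [hprofit z hzR] at h1
      have hindPI : AoNIndep γ p (insert x R) :=
        aon_subset_indep hγ0 haon hsubPI (hPIindep _ hq)
      -- contradiction: γ (insert x R) = γ R = ∑ R but also = ∑ R + p x
      have : γ (insert x R) = ∑ i ∈ insert x R, p i := hindPI
      rw [Finset.sum_insert hxR] at this
      have hRsum : γ R = ∑ i ∈ R, p i := hRind
      have := hp x
      omega
    · -- the easy case : γ S = γ (S.erase x) + p x
      unfold AoNIndep at herase_ind ⊢
      rw [← hSx, Finset.sum_insert (Finset.notMem_erase _ _), h1, herase_ind]
      omega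

/-- L6: every independent subset extends to a "maximal" one spanning the ambient set. -/
lemma aon_exists_max (hγ0 : γ ∅ = 0)
    (haon : ∀ (i : Fin n) (S : Finset (Fin n)),
      γ (insert i S) = γ S ∨ γ (insert i S) = γ S + p i) :
    ∀ (k : ℕ) (S A : Finset (Fin n)), (S \ A).card ≤ k → A ⊆ S → AoNIndep γ p A →
      ∃ B, A ⊆ B ∧ B ⊆ S ∧ AoNIndep γ p B ∧ ∀ i ∈ S, γ (insert i B) = γ B := by
  intro k
  induction k with
  | zero =>
    intro S A hcard hAS hA
    have : S \ A = ∅ := Finset.card_eq_zero.mp (Nat.le_zero.mp hcard)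
    have hSA : S = A := Finset.Subset.antisymm (by
      intro x hx
      by_contra hxA
      exact absurd (Finset.mem_sdiff.mpr ⟨hx, hxA⟩) (by simp [this])) hAS
    exact ⟨A, Finset.Subset.refl _, hAS, hA, by
      intro i hi
      rw [hSA] at hi
      rw [Finset.insert_eq_self.mpr hi]⟩
  | succ k ih =>
    intro S A hcard hAS hA
    by_cases hall : ∀ i ∈ S, γ (insert i A) = γ A
    · exact ⟨A, Finset.Subset.refl _, hAS, hA, hall⟩
    · push_neg at hall
      obtain ⟨i, hiS, hne⟩ := hall
      have hiA : i ∉ A := fun h => hne (by rw [Finset.insert_eq_self.mpr h])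
      have hadd : γ (insert i A) = γ A + p i := (haon i A).resolve_left hne
      have hind : AoNIndep γ p (insert i A) := by
        unfold AoNIndep at hA ⊢
        rw [Finset.sum_insert hiA, hadd, hA]; omega
      have hsub : insert i A ⊆ S := Finset.insert_subset hiS hAS
      have hcard' : (S \ insert i A).card ≤ k := by
        have h1 : S \ insert i A = (S \ A).erase i := by
          ext x; simp [Finset.mem_sdiff, Finset.mem_erase, Finset.mem_insert]; tauto
        have h2 : i ∈ S \ A := Finset.mem_sdiff.mpr ⟨hiS, hiA⟩
        rw [h1, Finset.card_erase_of_mem h2]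
        omega
      obtain ⟨B, hB1, hB2, hB3, hB4⟩ := ih S (insert i A) hcard' hsub hind
      exact ⟨B, (Finset.subset_insert _ _).trans hB1, hB2, hB3, hB4⟩

/-- L8 helpers and lemma: γ of a profit class, and card bound for independent subsets. -/
lemma class_gamma
    (hmono : ∀ S T : Finset (Fin n), S ⊆ T → γ S ≤ γ T)
    (hsub : ∀ S T : Finset (Fin n), S ⊆ T → ∀ i : Fin n,
      γ (insert i S) + γ T ≥ γ (insert i T) + γ S)
    (haon : ∀ (i : Fin n) (S : Finset (Fin n)),
      γ (insert i S) = γ S ∨ γ (insert i S) = γ S + p i)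
    (PI : ℕ → Finset (Fin n))
    (hPIsub : ∀ q ∈ Finset.univ.image p, PI q ⊆ Finset.univ.filter (fun i => p i = q))
    (hPIindep : ∀ q ∈ Finset.univ.image p, AoNIndep γ p (PI q))
    (hPImax : ∀ q ∈ Finset.univ.image p, ∀ B : Finset (Fin n),
      B ⊆ Finset.univ.filter (fun i => p i = q) → AoNIndep γ p B → PI q ⊆ B → PI q = B)
    {q : ℕ} (hq : q ∈ Finset.univ.image p) :
    γ (Finset.univ.filter (fun i => p i = q)) = γ (PI q) := by
  set Pq := Finset.univ.filter (fun i : Fin n => p i = q) with hPq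
  have hspan : ∀ i ∈ Pq, γ (insert i (PI q)) = γ (PI q) := by
    intro i hi
    by_cases hiPI : i ∈ PI q
    · rw [Finset.insert_eq_self.mpr hiPI]
    · rcases haon i (PI q) with h | h
      · exact h
      · exfalso
        have hpi : p i = q := (Finset.mem_filter.mp hi).2
        have hind : AoNIndep γ p (insert i (PI q)) := by
          have := hPIindep q hq
          unfold AoNIndep at this ⊢
          rw [Finset.sum_insert hiPI, h, this]; omega
        have := hPImax q hq (insert i (PI q))
          (Finset.insert_subset hi (hPIsub q hq)) hind (Finset.subset_insert _ _)
        exact hiPI (this ▸ Finset.mem_insert_self i (PI q))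
  have h1 : γ (PI q ∪ Pq) = γ (PI q) := aon_span_union hmono hsub Pq (PI q) hspan
  rwa [Finset.union_eq_right.mpr (hPIsub q hq)] at h1

lemma class_card_le
    (hp : ∀ i, 1 ≤ p i) (hγ0 : γ ∅ = 0)
    (hmono : ∀ S T : Finset (Fin n), S ⊆ T → γ S ≤ γ T)
    (hsub : ∀ S T : Finset (Fin n), S ⊆ T → ∀ i : Fin n,
      γ (insert i S) + γ T ≥ γ (insert i T) + γ S)
    (haon : ∀ (i : Fin n) (S : Finset (Fin n)),
      γ (insert i S) = γ S ∨ γ (insert i S) = γ S + p i)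
    (PI : ℕ → Finset (Fin n))
    (hPIsub : ∀ q ∈ Finset.univ.image p, PI q ⊆ Finset.univ.filter (fun i => p i = q))
    (hPIindep : ∀ q ∈ Finset.univ.image p, AoNIndep γ p (PI q))
    (hPImax : ∀ q ∈ Finset.univ.image p, ∀ B : Finset (Fin n),
      B ⊆ Finset.univ.filter (fun i => p i = q) → AoNIndep γ p B → PI q ⊆ B → PI q = B)
    {q : ℕ} (hq : q ∈ Finset.univ.image p)
    {B : Finset (Fin n)} (hB : B ⊆ Finset.univ.filter (fun i => p i = q))
    (hBind : AoNIndep γ p B) : B.card ≤ (PI q).card := by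
  obtain ⟨x, -, hxq⟩ := Finset.mem_image.mp hq
  have hqpos : 1 ≤ q := hxq ▸ hp x
  have hsum : ∀ (C : Finset (Fin n)), C ⊆ Finset.univ.filter (fun i => p i = q) →
      ∑ i ∈ C, p i = q * C.card := by
    intro C hC
    rw [Finset.sum_congr rfl (fun i hi => (Finset.mem_filter.mp (hC hi)).2),
      Finset.sum_const, smul_eq_mul, Nat.mul_comm]
  have h1 : γ B = q * B.card := by rw [hBind]; exact hsum B hB
  have h2 : γ (PI q) = q * (PI q).card := by
    rw [hPIindep q hq]; exact hsum _ (hPIsub q hq)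
  have h3 : γ B ≤ γ (Finset.univ.filter (fun i => p i = q)) := hmono _ _ hB
  rw [class_gamma hmono hsub haon PI hPIsub hPIindep hPImax hq] at h3
  have : q * B.card ≤ q * (PI q).card := by omega
  exact Nat.le_of_mul_le_mul_left this hqpos

/-- L9: extension of an independent subset of a class to a maximal one using PI. -/
lemma class_extend
    (hp : ∀ i, 1 ≤ p i) (hγ0 : γ ∅ = 0)
    (hmono : ∀ S T : Finset (Fin n), S ⊆ T → γ S ≤ γ T)
    (hsub : ∀ S T : Finset (Fin n), S ⊆ T → ∀ i : Fin n,
      γ (insert i S) + γ T ≥ γ (insert i T) + γ S)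
    (haon : ∀ (i : Fin n) (S : Finset (Fin n)),
      γ (insert i S) = γ S ∨ γ (insert i S) = γ S + p i)
    (PI : ℕ → Finset (Fin n))
    (hPIsub : ∀ q ∈ Finset.univ.image p, PI q ⊆ Finset.univ.filter (fun i => p i = q))
    (hPIindep : ∀ q ∈ Finset.univ.image p, AoNIndep γ p (PI q))
    (hPImax : ∀ q ∈ Finset.univ.image p, ∀ B : Finset (Fin n),
      B ⊆ Finset.univ.filter (fun i => p i = q) → AoNIndep γ p B → PI q ⊆ B → PI q = B)
    {q : ℕ} (hq : q ∈ Finset.univ.image p) :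
    ∀ (k : ℕ) (B : Finset (Fin n)), B ⊆ Finset.univ.filter (fun i => p i = q) →
      AoNIndep γ p B → (PI q).card - B.card ≤ k →
      ∃ C, B ⊆ C ∧ C ⊆ B ∪ PI q ∧ C ⊆ Finset.univ.filter (fun i => p i = q) ∧
        AoNIndep γ p C ∧ C.card = (PI q).card := by
  obtain ⟨x, -, hxq⟩ := Finset.mem_image.mp hq
  have hqpos : 1 ≤ q := hxq ▸ hp x
  have hsum : ∀ (C : Finset (Fin n)), C ⊆ Finset.univ.filter (fun i => p i = q) →
      ∑ i ∈ C, p i = q * C.card := by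
    intro C hC
    rw [Finset.sum_congr rfl (fun i hi => (Finset.mem_filter.mp (hC hi)).2),
      Finset.sum_const, smul_eq_mul, Nat.mul_comm]
  intro k
  induction k with
  | zero =>
    intro B hBsub hBind hk
    have hle : B.card ≤ (PI q).card :=
      class_card_le hp hγ0 hmono hsub haon PI hPIsub hPIindep hPImax hq hBsub hBind
    exact ⟨B, Finset.Subset.refl _, Finset.subset_union_left, hBsub, hBind, by omega⟩
  | succ k ih =>
    intro B hBsub hBind hk
    by_cases hfull : (PI q).card ≤ B.card
    · exact ⟨B, Finset.Subset.refl _, Finset.subset_union_left, hBsub, hBind, le_antisymm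
        (class_card_le hp hγ0 hmono hsub haon PI hPIsub hPIindep hPImax hq hBsub hBind) hfull⟩
    · -- find an element of PI q that can be added
      have hex : ∃ y ∈ PI q, y ∉ B ∧ γ (insert y B) = γ B + p y := by
        by_contra hcon
        push_neg at hcon
        have hspan : ∀ y ∈ PI q, γ (insert y B) = γ B := by
          intro y hy
          by_cases hyB : y ∈ B
          · rw [Finset.insert_eq_self.mpr hyB]
          · exact (haon y B).resolve_right (hcon y hy hyB)
        have h1 : γ (B ∪ PI q) = γ B := aon_span_union hmono hsub _ _ hspan
        have h2 : γ (PI q) ≤ γ (B ∪ PI q) := hmono _ _ Finset.subset_union_right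
        have h3 : γ (PI q) = q * (PI q).card := by
          rw [hPIindep q hq]; exact hsum _ (hPIsub q hq)
        have h4 : γ B = q * B.card := by rw [hBind]; exact hsum B hBsub
        have : q * (PI q).card ≤ q * B.card := by omega
        exact hfull (Nat.le_of_mul_le_mul_left this hqpos)
      obtain ⟨y, hyPI, hyB, hadd⟩ := hex
      have hyq : y ∈ Finset.univ.filter (fun i => p i = q) := hPIsub q hq hyPI
      have hBsub' : insert y B ⊆ Finset.univ.filter (fun i => p i = q) :=
        Finset.insert_subset hyq hBsub
      have hBind' : AoNIndep γ p (insert y B) := by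
        unfold AoNIndep at hBind ⊢
        rw [Finset.sum_insert hyB, hadd, hBind]; omega
      have hcard : (PI q).card - (insert y B).card ≤ k := by
        rw [Finset.card_insert_of_notMem hyB]; omega
      obtain ⟨C, hC1, hC2, hC3, hC4, hC5⟩ := ih (insert y B) hBsub' hBind' hcard
      refine ⟨C, (Finset.subset_insert _ _).trans hC1, ?_, hC3, hC4, hC5⟩
      intro z hz
      rcases Finset.mem_union.mp (hC2 hz) with hz' | hz'
      · rcases Finset.mem_insert.mp hz' with rfl | hz''
        · exact Finset.mem_union_right _ hyPI
        · exact Finset.mem_union_left _ hz''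
      · exact Finset.mem_union_right _ hz'



lemma exists_greedy_prefix (P : Finset (Fin n)) (w : Fin n → ℕ) :
    ∃ F : ℕ → Finset (Fin n), (∀ k, F k ⊆ P) ∧ (∀ k, (F k).card = min k P.card) ∧
      (∀ k, F k ⊆ F (k + 1)) ∧
      (∀ k (C : Finset (Fin n)), C ⊆ P → (F k).card ≤ C.card →
        ∑ i ∈ F k, w i ≤ ∑ i ∈ C, w i) := by
  classical
  set step : Finset (Fin n) → Finset (Fin n) := fun Fk =>
    if h : (P \ Fk).Nonempty then insert (Finset.exists_min_image (P \ Fk) w h).choose Fk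
    else Fk with hstep
  set F : ℕ → Finset (Fin n) := fun k => step^[k] ∅ with hF
  have hFsucc : ∀ k, F (k + 1) = step (F k) := by
    intro k; simp only [hF, Function.iterate_succ_apply']
  have hsubP : ∀ k, F k ⊆ P := by
    intro k
    induction k with
    | zero => simp [hF]
    | succ k ih =>
      rw [hFsucc k, hstep]
      by_cases h : (P \ F k).Nonempty
      · simp only [dif_pos h]
        have hx := (Finset.exists_min_image (P \ F k) w h).choose_spec
        obtain ⟨hx1, -⟩ := hx
        exact Finset.insert_subset (Finset.mem_sdiff.mp hx1).1 ih
      · simpa only [dif_neg h] using ih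
  have hmonoF : ∀ k, F k ⊆ F (k + 1) := by
    intro k
    rw [hFsucc k, hstep]
    by_cases h : (P \ F k).Nonempty
    · simp only [dif_pos h]; exact Finset.subset_insert _ _
    · simp only [dif_neg h]; exact Finset.Subset.refl _
  have hcard : ∀ k, (F k).card = min k P.card := by
    intro k
    induction k with
    | zero => simp [hF]
    | succ k ih =>
      rw [hFsucc k, hstep]
      by_cases h : (P \ F k).Nonempty
      · simp only [dif_pos h]
        have hx := (Finset.exists_min_image (P \ F k) w h).choose_spec
        obtain ⟨hx1, -⟩ := hx
        have hxnot : (Finset.exists_min_image (P \ F k) w h).choose ∉ F k :=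
          (Finset.mem_sdiff.mp hx1).2
        rw [Finset.card_insert_of_notMem hxnot, ih]
        have hlt : (F k).card < P.card := by
          apply Finset.card_lt_card
          exact Finset.ssubset_iff_of_subset (hsubP k) |>.mpr
            ⟨_, (Finset.mem_sdiff.mp hx1).1, hxnot⟩
        omega
      · simp only [dif_neg h]
        rw [ih]
        have hPF : P ⊆ F k := by
          intro x hx
          by_contra hxF
          exact h ⟨x, Finset.mem_sdiff.mpr ⟨hx, hxF⟩⟩
        have : (F k).card = P.card := le_antisymm (Finset.card_le_card (hsubP k))
          (Finset.card_le_card hPF)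
        omega
  refine ⟨F, hsubP, hcard, hmonoF, ?_⟩
  intro k
  induction k with
  | zero =>
    intro C _ _
    simp [hF]
  | succ k ih =>
    intro C hCP hCcard
    rw [hFsucc k, hstep] at hCcard ⊢
    by_cases h : (P \ F k).Nonempty
    · simp only [dif_pos h] at hCcard ⊢
      have hx := (Finset.exists_min_image (P \ F k) w h).choose_spec
      set x := (Finset.exists_min_image (P \ F k) w h).choose with hxdef
      obtain ⟨hx1, hx2⟩ := hx
      have hxnot : x ∉ F k := (Finset.mem_sdiff.mp hx1).2
      have hcc : (F k).card < C.card := by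
        rw [Finset.card_insert_of_notMem hxnot] at hCcard; omega
      have hex : ∃ c ∈ C, c ∉ F k := by
        by_contra hcon
        push_neg at hcon
        exact absurd (Finset.card_le_card hcon) (by omega)
      obtain ⟨c, hcC, hcF⟩ := hex
      have hwc : w x ≤ w c := hx2 c (Finset.mem_sdiff.mpr ⟨hCP hcC, hcF⟩)
      have hIH : ∑ i ∈ F k, w i ≤ ∑ i ∈ C.erase c, w i := by
        apply ih (C.erase c) ((Finset.erase_subset _ _).trans hCP)
        rw [Finset.card_erase_of_mem hcC]; omega
      have h1 : ∑ i ∈ insert x (F k), w i = w x + ∑ i ∈ F k, w i :=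
        Finset.sum_insert hxnot
      have h2 : ∑ i ∈ C.erase c, w i + w c = ∑ i ∈ C, w i :=
        Finset.sum_erase_add _ _ hcC
      omega
    · simp only [dif_neg h] at hCcard ⊢
      exact ih C hCP hCcard


theorem reduction_to_modularization {n T : ℕ} (γ : Finset (Fin n) → ℕ)
    (p w : Fin n → ℕ) (W Δ : Fin T → ℕ)
    (hW : Monotone W)
    (hp : ∀ i, 1 ≤ p i)
    (hγ0 : γ ∅ = 0)
    (hmono : ∀ S T : Finset (Fin n), S ⊆ T → γ S ≤ γ T)
    (hsub : ∀ S T : Finset (Fin n), S ⊆ T → ∀ i : Fin n,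
      γ (insert i S) + γ T ≥ γ (insert i T) + γ S)
    (haon : ∀ (i : Fin n) (S : Finset (Fin n)),
      γ (insert i S) = γ S ∨ γ (insert i S) = γ S + p i)
    (hsingle : ∀ i : Fin n, AoNIndep γ p {i})
    -- for each profit value `q` occurring among the `p i`, `PI q` is an
    -- inclusionwise maximal independent subset of minimum total weight of the
    -- profit class `{i : p i = q}`
    (PI : ℕ → Finset (Fin n))
    (hPIsub : ∀ q ∈ Finset.univ.image p, PI q ⊆ Finset.univ.filter (fun i => p i = q))
    (hPIindep : ∀ q ∈ Finset.univ.image p, AoNIndep γ p (PI q))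
    (hPImax : ∀ q ∈ Finset.univ.image p, ∀ B : Finset (Fin n),
      B ⊆ Finset.univ.filter (fun i => p i = q) → AoNIndep γ p B → PI q ⊆ B → PI q = B)
    (hPImin : ∀ q ∈ Finset.univ.image p, ∀ B : Finset (Fin n),
      B ⊆ Finset.univ.filter (fun i => p i = q) → AoNIndep γ p B →
      (∀ C : Finset (Fin n), C ⊆ Finset.univ.filter (fun i => p i = q) →
        AoNIndep γ p C → B ⊆ C → B = C) →
      ∑ i ∈ PI q, w i ≤ ∑ i ∈ B, w i)
    (Istar : Finset (Fin n)) (hIstar : Istar = (Finset.univ.image p).biUnion PI) :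
    -- (a) every feasible chain is dominated by a feasible chain inside I*
    (∀ S : Fin T → Finset (Fin n), Monotone S → (∀ t, ∑ i ∈ S t, w i ≤ W t) →
      ∃ S' : Fin T → Finset (Fin n),
        Monotone S' ∧ (∀ t, ∑ i ∈ S' t, w i ≤ W t) ∧ (∀ t, S' t ⊆ Istar) ∧
        ∑ t, Δ t * γ (S t) ≤ ∑ t, Δ t * ∑ i ∈ S' t, p i) ∧
    -- (b) inside I*, the submodular profit coincides with the modular profit
    (∀ S : Fin T → Finset (Fin n), Monotone S → (∀ t, ∑ i ∈ S t, w i ≤ W t) →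
      (∀ t, S t ⊆ Istar) →
      ∑ t, Δ t * γ (S t) = ∑ t, Δ t * ∑ i ∈ S t, p i) := by
  classical
  constructor
  · -- part (a)
    intro S hSmono hSW
    -- the chain as a function on ℕ
    set f : ℕ → Finset (Fin n) := fun u => if h : u < T then S ⟨u, h⟩ else ∅ with hf
    have hfS : ∀ t : Fin T, f t.val = S t := by
      intro t
      simp only [hf, dif_pos t.isLt, Fin.eta]
    have hfmono : ∀ u v : ℕ, u ≤ v → v < T → f u ⊆ f v := by
      intro u v huv hv
      have hu : u < T := lt_of_le_of_lt huv hv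
      simp only [hf, dif_pos hu, dif_pos hv]
      exact hSmono (by exact Fin.mk_le_mk.mpr huv)
    -- total choice step extending an independent set to a spanning one
    have step : ∀ (B S' : Finset (Fin n)), ∃ C : Finset (Fin n),
        B ⊆ S' → AoNIndep γ p B →
          (B ⊆ C ∧ C ⊆ S' ∧ AoNIndep γ p C ∧ ∀ i ∈ S', γ (insert i C) = γ C) := by
      intro B S'
      by_cases h : B ⊆ S' ∧ AoNIndep γ p B
      · obtain ⟨C, hC1, hC2, hC3, hC4⟩ :=
          aon_exists_max hγ0 haon (S' \ B).card S' B le_rfl h.1 h.2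
        exact ⟨C, fun _ _ => ⟨hC1, hC2, hC3, hC4⟩⟩
      · exact ⟨∅, fun h1 h2 => absurd ⟨h1, h2⟩ h⟩
    obtain ⟨A, hA0, hAs⟩ : ∃ A : ℕ → Finset (Fin n),
        A 0 = (step ∅ (f 0)).choose ∧ ∀ t, A (t + 1) = (step (A t) (f (t + 1))).choose :=
      ⟨fun t => Nat.rec (motive := fun _ => Finset (Fin n)) ((step ∅ (f 0)).choose)
        (fun t' ih => (step ih (f (t' + 1))).choose) t, rfl, fun t => rfl⟩
    have hInv : ∀ t, t < T →
        A t ⊆ f t ∧ AoNIndep γ p (A t) ∧ ∀ i ∈ f t, γ (insert i (A t)) = γ (A t) := by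
      intro t
      induction t with
      | zero =>
        intro h
        have hc := (step ∅ (f 0)).choose_spec (Finset.empty_subset _)
          (by simp [AoNIndep, hγ0])
        rw [hA0]
        exact ⟨hc.2.1, hc.2.2.1, hc.2.2.2⟩
      | succ t ih =>
        intro h
        obtain ⟨h1, h2, h3⟩ := ih (by omega)
        have hc := (step (A t) (f (t + 1))).choose_spec
          (h1.trans (hfmono t (t + 1) (by omega) h)) h2
        rw [hAs t]
        exact ⟨hc.2.1, hc.2.2.1, hc.2.2.2⟩
    have hchain : ∀ t, t + 1 < T → A t ⊆ A (t + 1) := by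
      intro t ht
      obtain ⟨h1, h2, -⟩ := hInv t (by omega)
      rw [hAs t]
      exact ((step (A t) (f (t + 1))).choose_spec
        (h1.trans (hfmono t (t + 1) (by omega) ht)) h2).1
    have hAmono : ∀ u v : ℕ, u ≤ v → v < T → A u ⊆ A v := by
      intro u v huv hv
      obtain ⟨d, rfl⟩ := Nat.le.dest huv
      clear huv
      induction d with
      | zero => exact Finset.Subset.refl _
      | succ d ih =>
        have h1 : u + d + 1 = u + (d + 1) := by omega
        refine (ih (by omega)).trans ?_
        rw [← h1]
        exact hchain (u + d) (by omega)
    -- greedy prefix families of the PI q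
    have hFex := fun q : ℕ => exists_greedy_prefix (PI q) w
    choose Fq hFsub hFcard hFstep hFmin using hFex
    have hFmono : ∀ q k k', k ≤ k' → Fq q k ⊆ Fq q k' := by
      intro q k k' hkk'
      obtain ⟨d, rfl⟩ := Nat.le.dest hkk'
      clear hkk'
      induction d with
      | zero => exact Finset.Subset.refl _
      | succ d ih =>
        have h1 : k + d + 1 = k + (d + 1) := by omega
        refine ih.trans ?_
        rw [← h1]
        exact hFstep q (k + d)
    -- counts per profit class
    set kf : ℕ → ℕ → ℕ := fun t q => ((A t).filter (fun i => p i = q)).card with hkf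
    set S' : Fin T → Finset (Fin n) :=
      fun t => (Finset.univ.image p).biUnion (fun q => Fq q (kf t.val q)) with hS'
    -- basic facts for a fixed time
    have hClassSub : ∀ t q, (A t).filter (fun i => p i = q) ⊆
        Finset.univ.filter (fun i => p i = q) := by
      intro t q i hi
      exact Finset.mem_filter.mpr ⟨Finset.mem_univ i, (Finset.mem_filter.mp hi).2⟩
    have hClassInd : ∀ t, t < T → ∀ q, AoNIndep γ p ((A t).filter (fun i => p i = q)) := by
      intro t ht q
      exact aon_subset_indep hγ0 haon (Finset.filter_subset _ _) (hInv t ht).2.1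
    have hkle : ∀ t, t < T → ∀ q ∈ Finset.univ.image p, kf t q ≤ (PI q).card := by
      intro t ht q hq
      exact class_card_le hp hγ0 hmono hsub haon PI hPIsub hPIindep hPImax hq
        (hClassSub t q) (hClassInd t ht q)
    have hFqp : ∀ q ∈ Finset.univ.image p, ∀ k, ∀ i ∈ Fq q k, p i = q := by
      intro q hq k i hi
      exact (Finset.mem_filter.mp (hPIsub q hq (hFsub q k hi))).2
    have hdisj : ∀ t : Fin T, (↑(Finset.univ.image p) : Set ℕ).PairwiseDisjoint
        (fun q => Fq q (kf t.val q)) := by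
      intro t q hq q' hq' hne
      simp only [Finset.coe_image, Set.mem_image] at hq hq'
      refine Finset.disjoint_left.mpr fun i hi hi' => hne ?_
      have h1 : p i = q := hFqp q (by  simpa using hq) _ i hi
      have h2 : p i = q' := hFqp q' (by simpa using hq') _ i hi'
      rw [← h1, h2]
    -- the value identity
    have hval : ∀ t : Fin T, γ (S t) = ∑ i ∈ S' t, p i := by
      intro t
      obtain ⟨h1, h2, h3⟩ := hInv t.val t.isLt
      have hspan : γ (A t.val ∪ f t.val) = γ (A t.val) :=
        aon_span_union hmono hsub (f t.val) (A t.val) h3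
      rw [Finset.union_eq_right.mpr h1] at hspan
      have e1 : γ (S t) = ∑ i ∈ A t.val, p i := by
        rw [← hfS t, hspan]; exact h2
      have e2 : ∑ i ∈ A t.val, p i =
          ∑ q ∈ Finset.univ.image p, ∑ i ∈ (A t.val).filter (fun i => p i = q), p i :=
        (Finset.sum_fiberwise_of_maps_to
          (fun i _ => Finset.mem_image_of_mem p (Finset.mem_univ i)) p).symm
      have e3 : ∑ i ∈ S' t, p i =
          ∑ q ∈ Finset.univ.image p, ∑ i ∈ Fq q (kf t.val q), p i := by
        rw [hS']
        exact Finset.sum_biUnion (hdisj t)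
      rw [e1, e2, e3]
      refine Finset.sum_congr rfl fun q hq => ?_
      have c1 : ∑ i ∈ (A t.val).filter (fun i => p i = q), p i = kf t.val q * q := by
        rw [Finset.sum_congr rfl (fun i hi => (Finset.mem_filter.mp hi).2),
          Finset.sum_const, smul_eq_mul]
      have c2 : ∑ i ∈ Fq q (kf t.val q), p i = kf t.val q * q := by
        rw [Finset.sum_congr rfl (fun i hi => hFqp q hq _ i hi), Finset.sum_const,
          smul_eq_mul, hFcard]
        congr 1
        exact Nat.min_eq_left (hkle t.val t.isLt q hq)
      rw [c1, c2]
    refine ⟨S', ?_, ?_, ?_, ?_⟩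
    · -- monotone
      intro t t' htt'
      rw [hS']
      refine Finset.biUnion_subset.mpr fun q hq => ?_
      refine Finset.Subset.trans ?_ (Finset.subset_biUnion_of_mem _ hq)
      refine hFmono q _ _ ?_
      exact Finset.card_le_card
        (Finset.filter_subset_filter _ (hAmono t.val t'.val htt' t'.isLt))
    · -- weights
      intro t
      have e3 : ∑ i ∈ S' t, w i =
          ∑ q ∈ Finset.univ.image p, ∑ i ∈ Fq q (kf t.val q), w i := by
        rw [hS']
        exact Finset.sum_biUnion (hdisj t)
      obtain ⟨h1, h2, -⟩ := hInv t.val t.isLt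
      have key : ∀ q ∈ Finset.univ.image p,
          ∑ i ∈ Fq q (kf t.val q), w i ≤ ∑ i ∈ (A t.val).filter (fun i => p i = q), w i := by
        intro q hq
        set Ct := (A t.val).filter (fun i => p i = q) with hCt
        obtain ⟨Cst, hC1, hC2, hC3, hC4, hC5⟩ :=
          class_extend hp hγ0 hmono hsub haon PI hPIsub hPIindep hPImax hq
            (PI q).card Ct (hClassSub t.val q) (hClassInd t.val t.isLt q)
            (Nat.sub_le _ _)
        have hCmax : ∀ D : Finset (Fin n), D ⊆ Finset.univ.filter (fun i => p i = q) →
            AoNIndep γ p D → Cst ⊆ D → Cst = D := by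
          intro D hD hDind hCD
          refine Finset.eq_of_subset_of_card_le hCD ?_
          rw [hC5]
          exact class_card_le hp hγ0 hmono hsub haon PI hPIsub hPIindep hPImax hq hD hDind
        have hwPI : ∑ i ∈ PI q, w i ≤ ∑ i ∈ Cst, w i := hPImin q hq Cst hC3 hC4 hCmax
        have hDsub : Cst \ Ct ⊆ PI q := by
          intro z hz
          obtain ⟨hz1, hz2⟩ := Finset.mem_sdiff.mp hz
          rcases Finset.mem_union.mp (hC2 hz1) with h | h
          · exact absurd h hz2
          · exact h
        have hEcard : (PI q \ (Cst \ Ct)).card = Ct.card := by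
          rw [Finset.card_sdiff_of_subset hDsub, Finset.card_sdiff_of_subset hC1, hC5]
          have := Finset.card_le_card hC1
          omega
        have hFle : ∑ i ∈ Fq q (kf t.val q), w i ≤ ∑ i ∈ PI q \ (Cst \ Ct), w i := by
          refine hFmin q (kf t.val q) _ (Finset.sdiff_subset) ?_
          rw [hEcard, hFcard]
          exact le_trans (Nat.min_le_left _ _) le_rfl
        have hsum1 : ∑ i ∈ PI q \ (Cst \ Ct), w i + ∑ i ∈ Cst \ Ct, w i =
            ∑ i ∈ PI q, w i := Finset.sum_sdiff hDsub
        have hsum2 : ∑ i ∈ Cst \ Ct, w i + ∑ i ∈ Ct, w i = ∑ i ∈ Cst, w i :=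
          Finset.sum_sdiff hC1
        omega
      have e4 : ∑ q ∈ Finset.univ.image p, ∑ i ∈ (A t.val).filter (fun i => p i = q), w i
          = ∑ i ∈ A t.val, w i :=
        Finset.sum_fiberwise_of_maps_to
          (fun i _ => Finset.mem_image_of_mem p (Finset.mem_univ i)) w
      have e5 : ∑ i ∈ A t.val, w i ≤ ∑ i ∈ S t, w i := by
        rw [← hfS t]
        exact Finset.sum_le_sum_of_subset h1
      have := hSW t
      have hstep2 : ∑ q ∈ Finset.univ.image p, ∑ i ∈ Fq q (kf t.val q), w i ≤
          ∑ q ∈ Finset.univ.image p, ∑ i ∈ (A t.val).filter (fun i => p i = q), w i :=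
        Finset.sum_le_sum key
      omega
    · -- inside Istar
      intro t
      rw [hS', hIstar]
      refine Finset.biUnion_subset.mpr fun q hq => ?_
      exact (hFsub q _).trans (Finset.subset_biUnion_of_mem PI hq)
    · -- value
      refine le_of_eq (Finset.sum_congr rfl fun t _ => ?_)
      rw [hval t]
  · -- part (b)
    intro S hSmono hSW hSsub
    refine Finset.sum_congr rfl fun t _ => ?_
    have := istar_indep hp hγ0 hmono hsub haon hsingle PI hPIsub hPIindep (S t)
      (by rw [← hIstar]; exact hSsub t)
    rw [this]
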